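/- Let L(a,1) be a Lucas sequence of the first kind (b = 1), let p ≥ 3 be a prime with rank of appearance α_L(p) > 2, and suppose p² divides the discriminant D = a² + 4. Then the union of the closure in ℚ_p of the set {L_{n+1}/L_n : n ≥ 1} and the closure in ℚ_p of the set {L_{n+2}/L_n : n ≥ 1} equals all of ℚ_p. -/

import Mathlib

/-- The Lucas sequence of the first kind `L(a,b)`:
`L 0 = 0`, `L 1 = 1`, `L n = a L (n-1) + b L (n-2)`. -/
def lucasSeq (a b : ℤ) : ℕ → ℤ
  | 0 => 0
  | 1 => 1
  | n + 2 => a * lucasSeq a b (n + 1) + b * lucasSeq a b n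

namespace Stmt12Aux

open Finset

variable {p : ℕ} [Fact p.Prime]

lemma natnorm (n : ℕ) : ‖(n : ℚ_[p])‖ ≤ 1 := by
  have h := Padic.norm_int_le_one (p := p) (n : ℤ)
  push_cast at h
  exact h

lemma nonarch_sub (t u : ℚ_[p]) : ‖t - u‖ ≤ max ‖t‖ ‖u‖ := by
  have h := Padic.nonarchimedean t (-u)
  rw [norm_neg] at h
  simpa [sub_eq_add_neg] using h

lemma sub_le_one {t u : ℚ_[p]} (ht : ‖t‖ ≤ 1) (hu : ‖u‖ ≤ 1) : ‖t - u‖ ≤ 1 :=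
  (nonarch_sub t u).trans (max_le ht hu)

lemma iso {x y : ℚ_[p]} (h : ‖y‖ < ‖x‖) : ‖x + y‖ = ‖x‖ := by
  refine le_antisymm ((Padic.nonarchimedean _ _).trans (by rw [max_eq_left h.le])) ?_
  have h2 : ‖x‖ ≤ max ‖x + y‖ ‖y‖ := by
    have h3 := nonarch_sub (x + y) y
    simpa using h3
  rcases max_cases ‖x + y‖ ‖y‖ with ⟨he, _⟩ | ⟨he, _⟩
  · rw [he] at h2; exact h2
  · rw [he] at h2; exact absurd (lt_of_le_of_lt h2 h) (lt_irrefl _)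

/-- the product `t(t-1)...(t-m+1)` -/
noncomputable def PP (m : ℕ) (t : ℚ_[p]) : ℚ_[p] := ∏ i ∈ range m, (t - (i : ℚ_[p]))

lemma PP_le_one {t : ℚ_[p]} (ht : ‖t‖ ≤ 1) (m : ℕ) : ‖PP m t‖ ≤ 1 := by
  unfold PP
  rw [norm_prod]
  refine Finset.prod_le_one (fun i _ => norm_nonneg _) (fun i _ => sub_le_one ht (natnorm i))

lemma PP_lip {t u : ℚ_[p]} (ht : ‖t‖ ≤ 1) (hu : ‖u‖ ≤ 1) (m : ℕ) :
    ‖PP m t - PP m u‖ ≤ ‖t - u‖ := by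
  induction m with
  | zero => simp [PP]
  | succ m ih =>
    have key : PP (m+1) t - PP (m+1) u
        = (PP m t - PP m u) * (t - (m:ℚ_[p])) + PP m u * (t - u) := by
      simp only [PP, prod_range_succ]; ring
    rw [key]
    refine (Padic.nonarchimedean _ _).trans (max_le ?_ ?_)
    · rw [norm_mul]
      calc ‖PP m t - PP m u‖ * ‖t - (m:ℚ_[p])‖ ≤ ‖t - u‖ * 1 :=
            mul_le_mul ih (sub_le_one ht (natnorm m)) (norm_nonneg _) (norm_nonneg _)
      _ = ‖t - u‖ := mul_one _
    · rw [norm_mul]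
      calc ‖PP m u‖ * ‖t - u‖ ≤ 1 * ‖t - u‖ :=
            mul_le_mul_of_nonneg_right (PP_le_one hu m) (norm_nonneg _)
      _ = ‖t - u‖ := one_mul _

lemma PP_factor {t : ℚ_[p]} (ht : ‖t‖ ≤ 1) (m : ℕ) : ‖PP (m+1) t‖ ≤ ‖t‖ := by
  have h : PP (m+1) t = (∏ i ∈ range m, (t - ((i+1 : ℕ) : ℚ_[p]))) * t := by
    have := Finset.prod_range_succ' (fun i => (t - (i : ℚ_[p]))) m
    simpa [PP] using this
  rw [h, norm_mul]
  calc (‖∏ i ∈ range m, (t - ((i+1:ℕ):ℚ_[p]))‖) * ‖t‖ ≤ 1 * ‖t‖ := by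
        refine mul_le_mul_of_nonneg_right ?_ (norm_nonneg _)
        rw [norm_prod]
        exact Finset.prod_le_one (fun i _ => norm_nonneg _)
          (fun i _ => sub_le_one ht (natnorm _))
  _ = ‖t‖ := one_mul _

lemma PP_cast (N m : ℕ) : PP m (N : ℚ_[p]) = ((N.descFactorial m : ℕ) : ℚ_[p]) := by
  induction m with
  | zero => simp [PP]
  | succ m ih =>
    rcases lt_or_ge N (m+1) with h | h
    · rw [Nat.descFactorial_eq_zero_iff_lt.2 h]
      have hN : N ∈ range (m+1) := mem_range.2 h
      unfold PP
      rw [Finset.prod_eq_zero hN (by simp)]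
      simp
    · have hm : m ≤ N := by omega
      have hstep : PP (m+1) (N:ℚ_[p]) = PP m (N:ℚ_[p]) * ((N:ℚ_[p]) - (m:ℚ_[p])) := by
        simp [PP, prod_range_succ]
      rw [hstep, ih, Nat.descFactorial_succ, Nat.cast_mul, Nat.cast_sub hm]
      push_cast
      ring

lemma choose_cast (N m : ℕ) :
    ((N.choose m : ℕ) : ℚ_[p]) * ((Nat.factorial m : ℕ) : ℚ_[p]) = PP m (N : ℚ_[p]) := by
  rw [PP_cast, Nat.descFactorial_eq_factorial_mul_choose]
  push_cast
  ring

lemma val_fact_le (hp3 : 3 ≤ p) (j : ℕ) : padicValNat p (Nat.factorial (2*j+1)) ≤ j := by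
  have h := sub_one_mul_padicValNat_factorial (p := p) (2*j+1)
  have h2 : (p-1) * padicValNat p (Nat.factorial (2*j+1)) ≤ 2*j+1 := by
    rw [h]; exact Nat.sub_le _ _
  have h3 : 2 * padicValNat p (Nat.factorial (2*j+1)) ≤ (p-1) * padicValNat p (Nat.factorial (2*j+1)) :=
    Nat.mul_le_mul_right _ (by omega)
  omega

lemma norm_fact (hp3 : 3 ≤ p) (j : ℕ) :
    (p:ℝ) ^ (-(j:ℤ)) ≤ ‖((Nat.factorial (2*j+1) : ℕ) : ℚ_[p])‖ := by
  have hne : ((Nat.factorial (2*j+1) : ℕ) : ℚ_[p]) ≠ 0 :=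
    Nat.cast_ne_zero.2 (Nat.factorial_ne_zero _)
  rw [Padic.norm_eq_zpow_neg_valuation hne, Padic.valuation_natCast]
  have hp1 : (1:ℝ) ≤ p := by
    have := (Fact.out : p.Prime).one_lt
    exact_mod_cast this.le
  apply zpow_le_zpow_right₀ hp1
  have := val_fact_le hp3 j
  omega

variable {a : ℤ}


section defs
variable (p a)
/-- `D' = (a^2+4)/a^2` -/
noncomputable def dd : ℚ_[p] := ((a^2+4 : ℤ) : ℚ_[p]) / ((a : ℚ_[p]))^2

/-- `Φ_M(N) = Σ_{j<M} C(N,2j+1) D'^j`, equal to `L_N/c^{N-1}` for `M` large. -/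
noncomputable def SS (M N : ℕ) : ℚ_[p] :=
  ∑ j ∈ range M, ((N.choose (2*j+1) : ℕ) : ℚ_[p]) * (dd p a)^j
end defs

lemma norm_a (hpa : ¬(p:ℤ) ∣ a) : ‖(a:ℚ_[p])‖ = 1 :=
  le_antisymm (Padic.norm_int_le_one a)
    (not_lt.1 fun h => hpa (Padic.norm_intCast_lt_one_iff.1 h))

lemma norm_two' (hp3 : 3 ≤ p) : ‖(2:ℚ_[p])‖ = 1 := by
  have h : ((2:ℤ):ℚ_[p]) = (2:ℚ_[p]) := by push_cast; rfl
  rw [← h]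
  apply norm_a
  intro hdvd
  have h2 := Int.le_of_dvd (by norm_num) hdvd
  have : (3:ℤ) ≤ (p:ℤ) := by exact_mod_cast hp3
  omega

lemma norm_four (hp3 : 3 ≤ p) : ‖(4:ℚ_[p])‖ = 1 := by
  have h : ((4:ℤ):ℚ_[p]) = (4:ℚ_[p]) := by push_cast; rfl
  rw [← h]
  apply norm_a
  intro hdvd
  have h4 : p ∣ 4 := by exact_mod_cast hdvd
  have h5 := Nat.le_of_dvd (by norm_num) h4
  have hpr := (Fact.out : p.Prime)
  interval_cases p
  · norm_num at h4
  · exact absurd hpr (by norm_num)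

lemma norm_dd (hpa : ¬(p:ℤ) ∣ a) (hD : (p:ℤ)^2 ∣ a^2+4) :
    ‖dd p a‖ ≤ (p:ℝ)^(-2:ℤ) := by
  unfold dd
  rw [norm_div, norm_pow, norm_a hpa, one_pow, div_one]
  exact (Padic.norm_int_le_pow_iff_dvd _ 2).2 hD

lemma term_lip (hp3 : 3 ≤ p) (hpa : ¬(p:ℤ) ∣ a) (hD : (p:ℤ)^2 ∣ a^2+4) (u v j : ℕ) :
    ‖(((u.choose (2*j+1) : ℕ) : ℚ_[p]) - ((v.choose (2*j+1) : ℕ) : ℚ_[p])) * (dd p a)^j‖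
      ≤ (p:ℝ)^(-(j:ℤ)) * ‖(u:ℚ_[p]) - (v:ℚ_[p])‖ := by
  have hp1 : (1:ℝ) < p := by exact_mod_cast (Fact.out : p.Prime).one_lt
  have hp0 : (0:ℝ) < p := by linarith
  have hFpos : (0:ℝ) < ‖((Nat.factorial (2*j+1) : ℕ) : ℚ_[p])‖ :=
    norm_pos_iff.2 (Nat.cast_ne_zero.2 (Nat.factorial_ne_zero _))
  have hmul : ‖(((u.choose (2*j+1):ℕ):ℚ_[p]) - ((v.choose (2*j+1):ℕ):ℚ_[p]))‖
      * ‖((Nat.factorial (2*j+1) : ℕ) : ℚ_[p])‖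
      = ‖PP (2*j+1) (u:ℚ_[p]) - PP (2*j+1) (v:ℚ_[p])‖ := by
    rw [← norm_mul, sub_mul, choose_cast, choose_cast]
  have hPP : ‖PP (2*j+1) (u:ℚ_[p]) - PP (2*j+1) (v:ℚ_[p])‖ ≤ ‖(u:ℚ_[p]) - (v:ℚ_[p])‖ :=
    PP_lip (natnorm u) (natnorm v) _
  have hA : ‖(((u.choose (2*j+1):ℕ):ℚ_[p]) - ((v.choose (2*j+1):ℕ):ℚ_[p]))‖
      ≤ ‖(u:ℚ_[p]) - (v:ℚ_[p])‖ * (p:ℝ)^((j:ℤ)) := by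
    rw [← mul_le_mul_iff_of_pos_right hFpos, hmul]
    calc ‖PP (2*j+1) (u:ℚ_[p]) - PP (2*j+1) (v:ℚ_[p])‖
        ≤ ‖(u:ℚ_[p]) - (v:ℚ_[p])‖ := hPP
      _ = ‖(u:ℚ_[p]) - (v:ℚ_[p])‖ * ((p:ℝ)^((j:ℤ)) * (p:ℝ)^(-(j:ℤ))) := by
          rw [← zpow_add₀ (ne_of_gt hp0)]; simp
      _ ≤ ‖(u:ℚ_[p]) - (v:ℚ_[p])‖ * ((p:ℝ)^((j:ℤ)) * ‖((Nat.factorial (2*j+1) : ℕ) : ℚ_[p])‖) := by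
          refine mul_le_mul_of_nonneg_left ?_ (norm_nonneg _)
          exact mul_le_mul_of_nonneg_left (norm_fact hp3 j) (by positivity)
      _ = ‖(u:ℚ_[p]) - (v:ℚ_[p])‖ * (p:ℝ)^((j:ℤ)) * ‖((Nat.factorial (2*j+1) : ℕ) : ℚ_[p])‖ := by
          ring
  calc ‖(((u.choose (2*j+1):ℕ):ℚ_[p]) - ((v.choose (2*j+1):ℕ):ℚ_[p])) * (dd p a)^j‖
      = ‖(((u.choose (2*j+1):ℕ):ℚ_[p]) - ((v.choose (2*j+1):ℕ):ℚ_[p]))‖ * ‖dd p a‖^j := by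
        rw [norm_mul, norm_pow]
    _ ≤ (‖(u:ℚ_[p]) - (v:ℚ_[p])‖ * (p:ℝ)^((j:ℤ))) * ((p:ℝ)^(-2:ℤ))^j := by
        refine mul_le_mul hA (pow_le_pow_left₀ (norm_nonneg _) (norm_dd hpa hD) j)
          (by positivity) (by positivity)
    _ = (p:ℝ)^(-(j:ℤ)) * ‖(u:ℚ_[p]) - (v:ℚ_[p])‖ := by
        have hz : ((p:ℝ))^((j:ℤ)) * ((p:ℝ))^((-2)*(j:ℤ)) = ((p:ℝ))^(-(j:ℤ)) := by
          rw [← zpow_add₀ (ne_of_gt hp0), show (j:ℤ) + (-2)*(j:ℤ) = -(j:ℤ) by ring]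
        rw [← zpow_natCast ((p:ℝ)^(-2:ℤ)) j, ← zpow_mul, ← hz]
        ring

lemma term_fac (hp3 : 3 ≤ p) (hpa : ¬(p:ℤ) ∣ a) (hD : (p:ℤ)^2 ∣ a^2+4) (u j : ℕ) :
    ‖((u.choose (2*j+1) : ℕ) : ℚ_[p]) * (dd p a)^j‖ ≤ (p:ℝ)^(-(j:ℤ)) * ‖(u:ℚ_[p])‖ := by
  have hp1 : (1:ℝ) < p := by exact_mod_cast (Fact.out : p.Prime).one_lt
  have hp0 : (0:ℝ) < p := by linarith
  have hFpos : (0:ℝ) < ‖((Nat.factorial (2*j+1) : ℕ) : ℚ_[p])‖ :=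
    norm_pos_iff.2 (Nat.cast_ne_zero.2 (Nat.factorial_ne_zero _))
  have hmul : ‖((u.choose (2*j+1):ℕ):ℚ_[p])‖ * ‖((Nat.factorial (2*j+1) : ℕ) : ℚ_[p])‖
      = ‖PP (2*j+1) (u:ℚ_[p])‖ := by rw [← norm_mul, choose_cast]
  have hPP : ‖PP (2*j+1) (u:ℚ_[p])‖ ≤ ‖(u:ℚ_[p])‖ := PP_factor (natnorm u) _
  have hA : ‖((u.choose (2*j+1):ℕ):ℚ_[p])‖ ≤ ‖(u:ℚ_[p])‖ * (p:ℝ)^((j:ℤ)) := by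
    rw [← mul_le_mul_iff_of_pos_right hFpos, hmul]
    calc ‖PP (2*j+1) (u:ℚ_[p])‖ ≤ ‖(u:ℚ_[p])‖ := hPP
      _ = ‖(u:ℚ_[p])‖ * ((p:ℝ)^((j:ℤ)) * (p:ℝ)^(-(j:ℤ))) := by
          rw [← zpow_add₀ (ne_of_gt hp0)]; simp
      _ ≤ ‖(u:ℚ_[p])‖ * ((p:ℝ)^((j:ℤ)) * ‖((Nat.factorial (2*j+1) : ℕ) : ℚ_[p])‖) := by
          refine mul_le_mul_of_nonneg_left ?_ (norm_nonneg _)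
          exact mul_le_mul_of_nonneg_left (norm_fact hp3 j) (by positivity)
      _ = ‖(u:ℚ_[p])‖ * (p:ℝ)^((j:ℤ)) * ‖((Nat.factorial (2*j+1) : ℕ) : ℚ_[p])‖ := by ring
  calc ‖((u.choose (2*j+1):ℕ):ℚ_[p]) * (dd p a)^j‖
      = ‖((u.choose (2*j+1):ℕ):ℚ_[p])‖ * ‖dd p a‖^j := by rw [norm_mul, norm_pow]
    _ ≤ (‖(u:ℚ_[p])‖ * (p:ℝ)^((j:ℤ))) * ((p:ℝ)^(-2:ℤ))^j := by
        refine mul_le_mul hA (pow_le_pow_left₀ (norm_nonneg _) (norm_dd hpa hD) j)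
          (by positivity) (by positivity)
    _ = (p:ℝ)^(-(j:ℤ)) * ‖(u:ℚ_[p])‖ := by
        have hz : ((p:ℝ))^((j:ℤ)) * ((p:ℝ))^((-2)*(j:ℤ)) = ((p:ℝ))^(-(j:ℤ)) := by
          rw [← zpow_add₀ (ne_of_gt hp0), show (j:ℤ) + (-2)*(j:ℤ) = -(j:ℤ) by ring]
        rw [← zpow_natCast ((p:ℝ)^(-2:ℤ)) j, ← zpow_mul, ← hz]
        ring


lemma key (hp3 : 3 ≤ p) (hpa : ¬(p:ℤ) ∣ a) (hD : (p:ℤ)^2 ∣ a^2+4) (M u v : ℕ) :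
    ‖SS p a (M+1) u - SS p a (M+1) v - ((u:ℚ_[p]) - (v:ℚ_[p]))‖
      ≤ (p:ℝ)^(-1:ℤ) * ‖(u:ℚ_[p]) - (v:ℚ_[p])‖ := by
  have hp1 : (1:ℝ) < p := by exact_mod_cast (Fact.out : p.Prime).one_lt
  have hdecomp : SS p a (M+1) u - SS p a (M+1) v - ((u:ℚ_[p]) - (v:ℚ_[p]))
      = ∑ j ∈ range M,
          (((u.choose (2*(j+1)+1) : ℕ) : ℚ_[p]) - ((v.choose (2*(j+1)+1) : ℕ) : ℚ_[p]))
            * (dd p a)^(j+1) := by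
    unfold SS
    rw [← Finset.sum_sub_distrib,
      Finset.sum_range_succ' (fun j => ((u.choose (2*j+1):ℕ):ℚ_[p]) * (dd p a)^j
        - ((v.choose (2*j+1):ℕ):ℚ_[p]) * (dd p a)^j) M]
    simp only [Nat.mul_zero, Nat.zero_add, Nat.choose_one_right, pow_zero, mul_one]
    rw [add_sub_cancel_right]
    exact Finset.sum_congr rfl (fun j _ => by ring)
  rw [hdecomp]
  refine IsUltrametricDist.norm_sum_le_of_forall_le_of_nonneg (by positivity) ?_
  intro j _
  refine (term_lip hp3 hpa hD u v (j+1)).trans ?_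
  refine mul_le_mul_of_nonneg_right ?_ (norm_nonneg _)
  apply zpow_le_zpow_right₀ hp1.le
  omega

lemma SS_zero (M : ℕ) : SS p a M 0 = 0 := by
  unfold SS
  refine Finset.sum_eq_zero (fun j _ => ?_)
  rw [Nat.choose_eq_zero_of_lt (by omega)]
  simp

lemma key0 (hp3 : 3 ≤ p) (hpa : ¬(p:ℤ) ∣ a) (hD : (p:ℤ)^2 ∣ a^2+4) (M u : ℕ) :
    ‖SS p a (M+1) u - (u:ℚ_[p])‖ ≤ (p:ℝ)^(-1:ℤ) * ‖(u:ℚ_[p])‖ := by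
  have h := key hp3 hpa hD M u 0
  rw [SS_zero] at h
  simpa using h

lemma SS_congr {M M' N : ℕ} (hMN : N ≤ 2*M) (hMM : M ≤ M') : SS p a M' N = SS p a M N := by
  unfold SS
  refine (Finset.sum_subset (Finset.range_subset_range.2 hMM) ?_).symm
  intro j hj hnj
  rw [Finset.mem_range] at hj hnj
  rw [Nat.choose_eq_zero_of_lt (by omega)]
  simp

lemma natid (N i : ℕ) : (N+1+1).choose (2*i+1+1+1) + N.choose (2*i+1+1+1)
    = 2 * ((N+1).choose (2*i+1+1+1)) + N.choose (2*i+1) := by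
  have h1 : (N+1+1).choose (2*i+1+1+1) = (N+1).choose (2*i+1+1) + (N+1).choose (2*i+1+1+1) :=
    Nat.choose_succ_succ _ _
  have h2 : (N+1).choose (2*i+1+1) = N.choose (2*i+1) + N.choose (2*i+1+1) :=
    Nat.choose_succ_succ _ _
  have h3 : (N+1).choose (2*i+1+1+1) = N.choose (2*i+1+1) + N.choose (2*i+1+1+1) :=
    Nat.choose_succ_succ _ _
  omega

lemma pascal (N M : ℕ) (h : N ≤ 2*M) :
    SS p a (M+1) (N+2) = 2 * SS p a (M+1) (N+1) + (dd p a - 1) * SS p a (M+1) N := by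
  have main : SS p a (M+1) (N+2) + SS p a (M+1) N
      = 2 * SS p a (M+1) (N+1) + dd p a * SS p a (M+1) N := by
    unfold SS
    rw [Finset.mul_sum, Finset.mul_sum, ← Finset.sum_add_distrib]
    rw [Finset.sum_range_succ'
      (fun j => (((N+2).choose (2*j+1) : ℕ):ℚ_[p]) * (dd p a)^j
        + ((N.choose (2*j+1):ℕ):ℚ_[p]) * (dd p a)^j) M]
    rw [Finset.sum_range_succ'
      (fun j => (2:ℚ_[p]) * ((((N+1).choose (2*j+1):ℕ):ℚ_[p]) * (dd p a)^j)) M]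
    rw [Finset.sum_range_succ
      (fun j => dd p a * (((N.choose (2*j+1):ℕ):ℚ_[p]) * (dd p a)^j)) M]
    have hzero : ((N.choose (2*M+1):ℕ):ℚ_[p]) = 0 := by
      rw [Nat.choose_eq_zero_of_lt (by omega)]; simp
    have hsum : (∑ k ∈ Finset.range M,
          ((((N+2).choose (2*(k+1)+1):ℕ):ℚ_[p]) * (dd p a)^(k+1)
            + ((N.choose (2*(k+1)+1):ℕ):ℚ_[p]) * (dd p a)^(k+1)))
        = (∑ k ∈ Finset.range M,
            (2:ℚ_[p]) * ((((N+1).choose (2*(k+1)+1):ℕ):ℚ_[p]) * (dd p a)^(k+1)))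
          + ∑ k ∈ Finset.range M, dd p a * (((N.choose (2*k+1):ℕ):ℚ_[p]) * (dd p a)^k) := by
      rw [← Finset.sum_add_distrib]
      refine Finset.sum_congr rfl (fun k _ => ?_)
      have hidx : 2*(k+1)+1 = 2*k+1+1+1 := by ring
      have hN2 : N+2 = N+1+1 := by ring
      have hcast := congrArg (Nat.cast : ℕ → ℚ_[p]) (natid N k)
      push_cast at hcast
      rw [hidx, hN2]
      push_cast
      linear_combination (dd p a)^(k+1) * hcast
    rw [hsum, hzero]
    have hone : 2*0+1 = 1 := by norm_num
    rw [hone]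
    simp only [Nat.choose_one_right, pow_zero, mul_one]
    push_cast
    ring
  linear_combination main

lemma dd_def : dd p a = ((a^2+4 : ℤ) : ℚ_[p]) / ((a : ℚ_[p]))^2 := rfl

lemma lucas_eq (haQ : (a:ℚ_[p]) ≠ 0) :
    ∀ N : ℕ, (lucasSeq a 1 N : ℚ_[p]) = ((a:ℚ_[p])/2)^(N-1) * SS p a (N+1) N := by
  intro N
  induction N using Nat.strong_induction_on with
  | _ N ih =>
    match N with
    | 0 => simp [lucasSeq, SS_zero]
    | 1 =>
      have h1 : SS p a 2 1 = 1 := by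
        unfold SS
        rw [Finset.sum_range_succ, Finset.sum_range_succ, Finset.sum_range_zero]
        rw [show (2*0+1) = 1 by norm_num, show (2*1+1) = 3 by norm_num]
        rw [show Nat.choose 1 3 = 0 from by decide, show Nat.choose 1 1 = 1 from by decide]
        norm_num
      rw [h1]
      simp [lucasSeq]
    | (n+2) =>
      have h1 := ih (n+1) (by omega)
      have h0 := ih n (by omega)
      have hrec : (lucasSeq a 1 (n+2) : ℚ_[p])
          = (a:ℚ_[p]) * (lucasSeq a 1 (n+1) : ℚ_[p]) + (lucasSeq a 1 n : ℚ_[p]) := by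
        show ((a * lucasSeq a 1 (n+1) + 1 * lucasSeq a 1 n : ℤ) : ℚ_[p]) = _
        push_cast
        ring
      have hP : SS p a (n+2+1) (n+2) = 2 * SS p a (n+2+1) (n+1) + (dd p a - 1) * SS p a (n+2+1) n :=
        pascal (p := p) (a := a) n (n+2) (by omega)
      have hc1 : SS p a (n+2+1) (n+1) = SS p a (n+1+1) (n+1) := SS_congr (by omega) (by omega)
      have hc0 : SS p a (n+2+1) n = SS p a (n+1) n := SS_congr (by omega) (by omega)
      have hexp2 : n+2-1 = n+1 := by omega
      have hexp1 : n+1-1 = n := by omega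
      rw [hrec, h1, h0, hexp2, hexp1, hP, hc1, hc0]
      set S1 : ℚ_[p] := SS p a (n+1+1) (n+1) with hS1def
      set S0 : ℚ_[p] := SS p a (n+1) n with hS0def
      have hdd1 : ((a:ℚ_[p])/2)^2 * (dd p a - 1) = 1 := by
        rw [dd_def]
        push_cast
        field_simp
        ring
      have h2c : ((a:ℚ_[p])/2) * 2 = (a:ℚ_[p]) := by field_simp
      rcases n with _ | m
      · have hS0 : S0 = 0 := by rw [hS0def]; exact SS_zero 1
        rw [hS0]
        field_simp
        ring
      · have hexp0 : m+1-1 = m := by omega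
        rw [hexp0]
        linear_combination (((a:ℚ_[p])/2)^(m+1) * S1) * h2c - (((a:ℚ_[p])/2)^m * S0) * hdd1


lemma dens (z : ℚ_[p]) (hz : ‖z‖ ≤ 1) {ε : ℝ} (hε : 0 < ε) :
    ∃ N : ℕ, 1 ≤ N ∧ ‖(N:ℚ_[p]) - z‖ < ε := by
  have hp1 : (1:ℝ) < p := by exact_mod_cast (Fact.out : p.Prime).one_lt
  obtain ⟨m, hm⟩ : ∃ m : ℕ, ((p:ℝ))⁻¹ ^ m < ε :=
    exists_pow_lt_of_lt_one hε (by rw [inv_lt_one_iff₀]; right; exact hp1)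
  set z' : ℤ_[p] := ⟨z, hz⟩ with hz'
  obtain ⟨k, hk⟩ := PadicInt.denseRange_natCast.exists_dist_lt z' (by positivity : (0:ℝ) < (p:ℝ)⁻¹ ^ m)
  refine ⟨k + p^m, by have := Nat.one_le_pow m p (Fact.out : p.Prime).pos; omega, ?_⟩
  have hpk : ‖((p:ℚ_[p]))^m‖ = ((p:ℝ))⁻¹ ^ m := by
    rw [Padic.norm_p_pow]
    rw [zpow_neg, inv_pow, zpow_natCast]
  have hzk : ‖(k:ℚ_[p]) - z‖ < (p:ℝ)⁻¹ ^ m := by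
    have hdist : dist z' ((k:ℕ) : ℤ_[p]) = ‖(k:ℚ_[p]) - z‖ := by
      rw [dist_eq_norm]
      rw [← PadicInt.padic_norm_e_of_padicInt]
      rw [← norm_neg]
      congr 1
      show -(z - ((k:ℤ_[p]):ℚ_[p])) = (k:ℚ_[p]) - z
      rw [PadicInt.coe_natCast]
      ring
    rw [← hdist]
    exact hk
  have hcast : (((k + p^m : ℕ)) : ℚ_[p]) - z = ((k:ℚ_[p]) - z) + ((p:ℚ_[p]))^m := by
    push_cast
    ring
  rw [hcast]
  refine lt_of_le_of_lt (Padic.nonarchimedean _ _) ?_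
  rw [hpk]
  exact max_lt (hzk.trans hm) hm


set_option maxHeartbeats 2000000 in
lemma main (hp3 : 3 ≤ p) (ha : a ≠ 0) (hpa : ¬ (p:ℤ) ∣ a) (hD : (p:ℤ)^2 ∣ a^2+4)
    (r : ℕ) (hr : r = 1 ∨ r = 2) (x : ℚ_[p]) (hx : 1 ≤ ‖x - ((a:ℚ_[p])/2)^r‖) :
    x ∈ closure {t : ℚ_[p] | ∃ n : ℕ, 1 ≤ n ∧
      t = (lucasSeq a 1 (n+r) : ℚ_[p]) / (lucasSeq a 1 n : ℚ_[p])} := by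
  have hp1 : (1:ℝ) < p := by exact_mod_cast (Fact.out : p.Prime).one_lt
  have hp0 : (0:ℝ) < p := by linarith
  have hpne : (p:ℝ) ≠ 0 := ne_of_gt hp0
  have haQ : (a:ℚ_[p]) ≠ 0 := Int.cast_ne_zero.2 ha
  have hnormA : ‖(a:ℚ_[p])‖ = 1 := norm_a hpa
  have hnorm2 : ‖(2:ℚ_[p])‖ = 1 := norm_two' hp3
  have hnc : ‖(a:ℚ_[p])/2‖ = 1 := by rw [norm_div, hnormA, hnorm2]; norm_num
  have hcne : ((a:ℚ_[p])/2) ≠ 0 := by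
    intro h0; rw [h0] at hnc; simp at hnc
  have hcr : ‖((a:ℚ_[p])/2)^r‖ = 1 := by rw [norm_pow, hnc, one_pow]
  have hcrne : ((a:ℚ_[p])/2)^r ≠ 0 := pow_ne_zero _ hcne
  set y : ℚ_[p] := x / ((a:ℚ_[p])/2)^r with hydef
  have hyx : x = y * ((a:ℚ_[p])/2)^r := by rw [hydef]; field_simp
  have hS1 : 1 ≤ ‖y - 1‖ := by
    have he : y - 1 = (x - ((a:ℚ_[p])/2)^r) / ((a:ℚ_[p])/2)^r := by
      rw [hydef]; field_simp
    rw [he, norm_div, hcr, div_one]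
    exact hx
  set S : ℝ := ‖y - 1‖ with hSdef
  have hSpos : 0 < S := lt_of_lt_of_le one_pos hS1
  have hyS : ‖y‖ ≤ S := by
    have he : y = (y - 1) + 1 := by ring
    rw [he]
    refine (Padic.nonarchimedean _ _).trans ?_
    rw [norm_one]
    exact max_le le_rfl hS1
  have hy1ne : y - 1 ≠ 0 := by
    intro h0
    rw [hSdef, h0] at hSpos
    simp at hSpos
  have h1y : ‖(1:ℚ_[p]) - y‖ = S := by
    rw [show (1:ℚ_[p]) - y = -(y-1) by ring, norm_neg]
  have hnormr : ‖((r:ℕ):ℚ_[p])‖ = 1 := by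
    rcases hr with h | h <;> subst h
    · simp
    · push_cast; exact hnorm2
  set FF : ℕ → ℚ_[p] := fun N => SS p a (N+1) N with hFFdef
  set HH : ℕ → ℚ_[p] := fun N => FF (N+r) - y * FF N with hHHdef
  have hFkey0 : ∀ u : ℕ, ‖FF u - (u:ℚ_[p])‖ ≤ (p:ℝ)^(-1:ℤ) * ‖(u:ℚ_[p])‖ := by
    intro u
    simpa [hFFdef] using key0 (a := a) hp3 hpa hD u u
  have claim : ∀ k : ℕ, ∃ N : ℕ, 1 ≤ N ∧ ‖HH N‖ ≤ S * (p:ℝ)^(-1-(k:ℤ)) := by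
    intro k
    induction k with
    | zero =>
      set tstar : ℚ_[p] := ((r:ℕ):ℚ_[p]) / (y - 1) with htstar
      have htle : ‖tstar‖ ≤ 1 := by
        rw [htstar, norm_div, hnormr, ← hSdef]
        rw [div_le_one hSpos]
        exact hS1
      obtain ⟨N, hN1, hNd⟩ := dens tstar htle (ε := (p:ℝ)^(-1:ℤ)) (by positivity)
      refine ⟨N, hN1, ?_⟩
      have hts : (1-y) * tstar = -((r:ℕ):ℚ_[p]) := by
        rw [htstar]; field_simp; ring
      have hdec : HH N = ((FF (N+r) - (((N+r:ℕ)):ℚ_[p])) - y*(FF N - (N:ℚ_[p])))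
          + (1-y)*((N:ℚ_[p]) - tstar) := by
        simp only [hHHdef]
        push_cast
        linear_combination hts
      rw [hdec]
      have hb1 : ‖FF (N+r) - (((N+r:ℕ)):ℚ_[p])‖ ≤ S * (p:ℝ)^(-1:ℤ) := by
        refine (hFkey0 (N+r)).trans ?_
        calc (p:ℝ)^(-1:ℤ) * ‖((N+r:ℕ):ℚ_[p])‖ ≤ (p:ℝ)^(-1:ℤ) * 1 :=
              mul_le_mul_of_nonneg_left (natnorm _) (by positivity)
          _ = 1 * (p:ℝ)^(-1:ℤ) := by ring
          _ ≤ S * (p:ℝ)^(-1:ℤ) := mul_le_mul_of_nonneg_right (by linarith) (by positivity)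
      have hb2 : ‖y*(FF N - (N:ℚ_[p]))‖ ≤ S * (p:ℝ)^(-1:ℤ) := by
        rw [norm_mul]
        calc ‖y‖ * ‖FF N - (N:ℚ_[p])‖ ≤ S * ((p:ℝ)^(-1:ℤ) * ‖(N:ℚ_[p])‖) :=
              mul_le_mul hyS (hFkey0 N) (norm_nonneg _) (le_of_lt hSpos)
          _ ≤ S * ((p:ℝ)^(-1:ℤ) * 1) := by
              refine mul_le_mul_of_nonneg_left ?_ (le_of_lt hSpos)
              exact mul_le_mul_of_nonneg_left (natnorm _) (by positivity)
          _ = S * (p:ℝ)^(-1:ℤ) := by ring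
      have hb3 : ‖(1-y)*((N:ℚ_[p]) - tstar)‖ ≤ S * (p:ℝ)^(-1:ℤ) := by
        rw [norm_mul, h1y]
        exact mul_le_mul_of_nonneg_left hNd.le (le_of_lt hSpos)
      have hfin : ‖((FF (N+r) - (((N+r:ℕ)):ℚ_[p])) - y*(FF N - (N:ℚ_[p])))
          + (1-y)*((N:ℚ_[p]) - tstar)‖ ≤ S * (p:ℝ)^(-1:ℤ) := by
        refine (Padic.nonarchimedean _ _).trans (max_le ?_ hb3)
        exact (nonarch_sub _ _).trans (max_le hb1 hb2)
      refine hfin.trans ?_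
      norm_num
    | succ k ihk =>
      obtain ⟨N, hN1, hHN⟩ := ihk
      set hstar : ℚ_[p] := HH N / (y - 1) with hstardef
      have hhsle : ‖hstar‖ ≤ (p:ℝ)^(-1-(k:ℤ)) := by
        rw [hstardef, norm_div, ← hSdef]
        rw [div_le_iff₀ hSpos]
        calc ‖HH N‖ ≤ S * (p:ℝ)^(-1-(k:ℤ)) := hHN
          _ = (p:ℝ)^(-1-(k:ℤ)) * S := by ring
      have hexple : (p:ℝ)^(-1-(k:ℤ)) ≤ 1 := by
        calc (p:ℝ)^(-1-(k:ℤ)) ≤ (p:ℝ)^(0:ℤ) := zpow_le_zpow_right₀ hp1.le (by omega)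
          _ = 1 := by norm_num
      obtain ⟨h, hh1, hhd⟩ := dens hstar (hhsle.trans hexple) (ε := (p:ℝ)^(-2-(k:ℤ))) (by positivity)
      have hhd' : ‖(h:ℚ_[p]) - hstar‖ ≤ (p:ℝ)^(-2-(k:ℤ)) := hhd.le
      have hhn : ‖(h:ℚ_[p])‖ ≤ (p:ℝ)^(-1-(k:ℤ)) := by
        have he : (h:ℚ_[p]) = ((h:ℚ_[p]) - hstar) + hstar := by ring
        rw [he]
        refine (Padic.nonarchimedean _ _).trans (max_le ?_ hhsle)
        refine hhd'.trans (zpow_le_zpow_right₀ hp1.le (by omega))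
      refine ⟨N + h, by omega, ?_⟩
      have e1 : SS p a (N+h+r+1) (N+h) = SS p a (N+h+1) (N+h) := SS_congr (by omega) (by omega)
      have e2 : SS p a (N+h+r+1) (N+r) = SS p a (N+r+1) (N+r) := SS_congr (by omega) (by omega)
      have e3 : SS p a (N+h+r+1) N = SS p a (N+1) N := SS_congr (by omega) (by omega)
      have hts : (1-y) * hstar = -(HH N) := by
        rw [hstardef]; field_simp; ring
      have hdec : HH (N+h)
          = ((SS p a (N+h+r+1) (N+h+r) - SS p a (N+h+r+1) (N+r) - (h:ℚ_[p]))
              - y * (SS p a (N+h+r+1) (N+h) - SS p a (N+h+r+1) N - (h:ℚ_[p])))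
            + (1-y)*((h:ℚ_[p]) - hstar) := by
        simp only [hHHdef, hFFdef] at hts ⊢
        linear_combination hts + y * e1 + e2 - y * e3
      rw [hdec]
      have hzz : (p:ℝ)^(-1:ℤ) * (p:ℝ)^(-1-(k:ℤ)) = (p:ℝ)^(-2-(k:ℤ)) := by
        rw [← zpow_add₀ hpne]
        congr 1
        ring
      have hA : ‖SS p a (N+h+r+1) (N+h+r) - SS p a (N+h+r+1) (N+r) - (h:ℚ_[p])‖
          ≤ S * (p:ℝ)^(-2-(k:ℤ)) := by
        have hk := key (a := a) hp3 hpa hD (N+h+r) (N+h+r) (N+r)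
        have hcast : ((N+h+r:ℕ):ℚ_[p]) - ((N+r:ℕ):ℚ_[p]) = (h:ℚ_[p]) := by push_cast; ring
        rw [hcast] at hk
        refine hk.trans ?_
        calc (p:ℝ)^(-1:ℤ) * ‖(h:ℚ_[p])‖ ≤ (p:ℝ)^(-1:ℤ) * (p:ℝ)^(-1-(k:ℤ)) :=
              mul_le_mul_of_nonneg_left hhn (by positivity)
          _ = 1 * (p:ℝ)^(-2-(k:ℤ)) := by rw [hzz]; ring
          _ ≤ S * (p:ℝ)^(-2-(k:ℤ)) := mul_le_mul_of_nonneg_right (by linarith) (by positivity)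
      have hB : ‖y * (SS p a (N+h+r+1) (N+h) - SS p a (N+h+r+1) N - (h:ℚ_[p]))‖
          ≤ S * (p:ℝ)^(-2-(k:ℤ)) := by
        have hk := key (a := a) hp3 hpa hD (N+h+r) (N+h) N
        have hcast : ((N+h:ℕ):ℚ_[p]) - ((N:ℕ):ℚ_[p]) = (h:ℚ_[p]) := by push_cast; ring
        rw [hcast] at hk
        rw [norm_mul]
        calc ‖y‖ * ‖SS p a (N+h+r+1) (N+h) - SS p a (N+h+r+1) N - (h:ℚ_[p])‖
            ≤ S * ((p:ℝ)^(-1:ℤ) * ‖(h:ℚ_[p])‖) :=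
              mul_le_mul hyS hk (norm_nonneg _) (le_of_lt hSpos)
          _ ≤ S * ((p:ℝ)^(-1:ℤ) * (p:ℝ)^(-1-(k:ℤ))) := by
              refine mul_le_mul_of_nonneg_left ?_ (le_of_lt hSpos)
              exact mul_le_mul_of_nonneg_left hhn (by positivity)
          _ = S * (p:ℝ)^(-2-(k:ℤ)) := by rw [hzz]
      have hC : ‖(1-y)*((h:ℚ_[p]) - hstar)‖ ≤ S * (p:ℝ)^(-2-(k:ℤ)) := by
        rw [norm_mul, h1y]
        exact mul_le_mul_of_nonneg_left hhd' (le_of_lt hSpos)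
      have hfin := (Padic.nonarchimedean
        ((SS p a (N+h+r+1) (N+h+r) - SS p a (N+h+r+1) (N+r) - (h:ℚ_[p]))
          - y * (SS p a (N+h+r+1) (N+h) - SS p a (N+h+r+1) N - (h:ℚ_[p])))
        ((1-y)*((h:ℚ_[p]) - hstar)))
      refine hfin.trans ?_
      have hmax : max ‖(SS p a (N+h+r+1) (N+h+r) - SS p a (N+h+r+1) (N+r) - (h:ℚ_[p]))
          - y * (SS p a (N+h+r+1) (N+h) - SS p a (N+h+r+1) N - (h:ℚ_[p]))‖
          ‖(1-y)*((h:ℚ_[p]) - hstar)‖ ≤ S * (p:ℝ)^(-2-(k:ℤ)) := by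
        refine max_le ?_ hC
        exact (nonarch_sub _ _).trans (max_le hA hB)
      refine hmax.trans ?_
      refine le_of_eq ?_
      congr 1
      push_cast
      ring
  rw [Metric.mem_closure_iff]
  intro ε hε
  have hSS : (0:ℝ) < S*S := by positivity
  obtain ⟨m, hm⟩ : ∃ m : ℕ, ((p:ℝ))⁻¹ ^ m < min (ε / (S*S)) (1/S) :=
    exists_pow_lt_of_lt_one (lt_min (by positivity) (by positivity))
      (by rw [inv_lt_one_iff₀]; right; exact hp1)
  have hkey : (p:ℝ)^(-1-(m:ℤ)) < min (ε/(S*S)) (1/S) := by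
    refine lt_of_le_of_lt ?_ hm
    have he : ((p:ℝ))⁻¹ ^ m = (p:ℝ)^(-(m:ℤ)) := by
      rw [inv_pow, ← zpow_natCast, ← zpow_neg]
    rw [he]
    exact zpow_le_zpow_right₀ hp1.le (by omega)
  obtain ⟨N, hN1, hHN⟩ := claim m
  have hNneQ : ((N:ℚ_[p])) ≠ 0 := Nat.cast_ne_zero.2 (by omega)
  have hNpos : 0 < ‖(N:ℚ_[p])‖ := norm_pos_iff.2 hNneQ
  have hpinv_lt : (p:ℝ)^(-1:ℤ) < 1 := by
    calc (p:ℝ)^(-1:ℤ) < (p:ℝ)^(0:ℤ) := zpow_lt_zpow_right₀ hp1 (by norm_num)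
      _ = 1 := by norm_num
  have hFNeq : ‖FF N‖ = ‖(N:ℚ_[p])‖ := by
    have h1 := hFkey0 N
    have hlt : ‖FF N - (N:ℚ_[p])‖ < ‖(N:ℚ_[p])‖ := by
      refine lt_of_le_of_lt h1 ?_
      nlinarith [hNpos, hpinv_lt]
    have he : FF N = (N:ℚ_[p]) + (FF N - (N:ℚ_[p])) := by ring
    rw [he, iso hlt]
  have hSm : S * (p:ℝ)^(-1-(m:ℤ)) < 1 := by
    have h2 := lt_of_lt_of_le hkey (min_le_right _ _)
    calc S * (p:ℝ)^(-1-(m:ℤ)) < S * (1/S) := mul_lt_mul_of_pos_left h2 hSpos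
      _ = 1 := by field_simp
  have hNlow : 1/S ≤ ‖(N:ℚ_[p])‖ := by
    rcases le_or_gt 1 ‖(N:ℚ_[p])‖ with hge | hlt
    · calc 1/S ≤ 1 := by rw [div_le_one hSpos]; exact hS1
        _ ≤ _ := hge
    · have hNr1 : ‖((N+r:ℕ):ℚ_[p])‖ = 1 := by
        have he : ((N+r:ℕ):ℚ_[p]) = ((r:ℕ):ℚ_[p]) + (N:ℚ_[p]) := by push_cast; ring
        rw [he, iso (by rw [hnormr]; exact hlt)]
        exact hnormr
      have hNrpos : 0 < ‖((N+r:ℕ):ℚ_[p])‖ := by rw [hNr1]; norm_num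
      have hFrEq : ‖FF (N+r)‖ = ‖((N+r:ℕ):ℚ_[p])‖ := by
        have h1 := hFkey0 (N+r)
        have hlt2 : ‖FF (N+r) - ((N+r:ℕ):ℚ_[p])‖ < ‖((N+r:ℕ):ℚ_[p])‖ := by
          refine lt_of_le_of_lt h1 ?_
          nlinarith [hNrpos, hpinv_lt]
        have he : FF (N+r) = ((N+r:ℕ):ℚ_[p]) + (FF (N+r) - ((N+r:ℕ):ℚ_[p])) := by ring
        rw [he, iso hlt2]
      have hHHlt : ‖HH N‖ < 1 := lt_of_le_of_lt hHN hSm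
      have hsum : FF (N+r) = HH N + y * FF N := by simp only [hHHdef]; ring
      have hle1 : (1:ℝ) ≤ max ‖HH N‖ (‖y * FF N‖) := by
        have h2 := Padic.nonarchimedean (HH N) (y * FF N)
        rw [← hsum, hFrEq, hNr1] at h2
        exact h2
      have hyFF : (1:ℝ) ≤ ‖y‖ * ‖FF N‖ := by
        rcases max_cases ‖HH N‖ (‖y * FF N‖) with ⟨he, _⟩ | ⟨he, _⟩
        · rw [he] at hle1; linarith
        · rw [he, norm_mul] at hle1; exact hle1
      rw [hFNeq] at hyFF
      rw [div_le_iff₀ hSpos]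
      nlinarith [hyS, hNpos, norm_nonneg y]
  have hFFne : FF N ≠ 0 := by
    intro h0
    rw [h0, norm_zero] at hFNeq
    exact absurd hFNeq.symm (ne_of_gt hNpos)
  have hLN : (lucasSeq a 1 N : ℚ_[p]) = ((a:ℚ_[p])/2)^(N-1) * FF N := by
    simpa [hFFdef] using lucas_eq (p := p) haQ N
  have hLNr : (lucasSeq a 1 (N+r) : ℚ_[p]) = ((a:ℚ_[p])/2)^(N+r-1) * FF (N+r) := by
    simpa [hFFdef] using lucas_eq (p := p) haQ (N+r)
  have hexp : N + r - 1 = (N-1) + r := by omega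
  have hbx : (lucasSeq a 1 (N+r) : ℚ_[p]) / (lucasSeq a 1 N : ℚ_[p]) - x
      = ((a:ℚ_[p])/2)^r * HH N / FF N := by
    have habs : ∀ G1 G0 : ℚ_[p], G0 ≠ 0 →
        (((a:ℚ_[p])/2)^(N-1+r) * G1) / (((a:ℚ_[p])/2)^(N-1) * G0) - y * ((a:ℚ_[p])/2)^r
        = ((a:ℚ_[p])/2)^r * (G1 - y*G0) / G0 := by
      intro G1 G0 hG0
      have h1 : ((a:ℚ_[p])/2)^(N-1+r) * G1
          = ((a:ℚ_[p])/2)^(N-1) * (((a:ℚ_[p])/2)^r * G1) := by rw [pow_add]; ring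
      rw [h1, mul_div_mul_left _ _ (pow_ne_zero (N-1) hcne)]
      rw [eq_div_iff hG0, sub_mul, div_mul_cancel₀ _ hG0]
      ring
    rw [hLN, hLNr, hexp, hyx]
    rw [habs (FF (N+r)) (FF N) hFFne]
    try simp only [hHHdef]
  refine ⟨(lucasSeq a 1 (N+r) : ℚ_[p]) / (lucasSeq a 1 N : ℚ_[p]), ⟨N, hN1, rfl⟩, ?_⟩
  rw [dist_eq_norm]
  have hxb : ‖x - (lucasSeq a 1 (N+r) : ℚ_[p]) / (lucasSeq a 1 N : ℚ_[p])‖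
      = ‖HH N‖ / ‖(N:ℚ_[p])‖ := by
    rw [← norm_neg]
    rw [show -(x - (lucasSeq a 1 (N+r) : ℚ_[p]) / (lucasSeq a 1 N : ℚ_[p]))
        = (lucasSeq a 1 (N+r) : ℚ_[p]) / (lucasSeq a 1 N : ℚ_[p]) - x by ring]
    rw [hbx, norm_div, norm_mul, hcr, one_mul, hFNeq]
  rw [hxb]
  have hfin : ‖HH N‖ / ‖(N:ℚ_[p])‖ ≤ (S * (p:ℝ)^(-1-(m:ℤ))) / (1/S) :=
    div_le_div₀ (by positivity) hHN (by positivity) hNlow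
  refine lt_of_le_of_lt hfin ?_
  have h3 : (S * (p:ℝ)^(-1-(m:ℤ))) / (1/S) = S*S*(p:ℝ)^(-1-(m:ℤ)) := by
    field_simp
  rw [h3]
  have h4 := lt_of_lt_of_le hkey (min_le_left _ _)
  calc S*S*(p:ℝ)^(-1-(m:ℤ)) < S*S*(ε/(S*S)) := mul_lt_mul_of_pos_left h4 hSS
    _ = ε := by field_simp

end Stmt12Aux

open Stmt12Aux in
theorem stmt_12 (p : ℕ) [Fact p.Prime] (hp : 3 ≤ p)
    (a : ℤ) (ha : a ≠ 0)
    -- `α` is the rank of appearance of `p` in `L(a,1)`, and `α > 2`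
    (α : ℕ) (hα0 : 0 < α) (hαdvd : (p : ℤ) ∣ lucasSeq a 1 α)
    (hαmin : ∀ m : ℕ, 0 < m → (p : ℤ) ∣ lucasSeq a 1 m → α ≤ m)
    (hα2 : 2 < α)
    -- `p²` divides the discriminant `D = a² + 4`
    (hD : (p : ℤ) ^ 2 ∣ (a ^ 2 + 4)) :
    closure {x : ℚ_[p] | ∃ n : ℕ, 1 ≤ n ∧
        x = (lucasSeq a 1 (n + 1) : ℚ_[p]) / (lucasSeq a 1 n : ℚ_[p])} ∪
      closure {x : ℚ_[p] | ∃ n : ℕ, 1 ≤ n ∧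
        x = (lucasSeq a 1 (n + 2) : ℚ_[p]) / (lucasSeq a 1 n : ℚ_[p])} = Set.univ := by
  have hp1 : (1:ℝ) < p := by exact_mod_cast (Fact.out : p.Prime).one_lt
  have hpa : ¬ (p:ℤ) ∣ a := by
    intro hap
    have h1 : (p:ℤ) ∣ a^2+4 := dvd_trans (dvd_pow_self _ two_ne_zero) hD
    have h2 : (p:ℤ) ∣ a^2 := dvd_pow hap two_ne_zero
    have h3 : (p:ℤ) ∣ 4 := by
      have := dvd_sub h1 h2
      simpa using this
    have h4 : p ∣ 4 := by exact_mod_cast h3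
    have h5 := Nat.le_of_dvd (by norm_num) h4
    have hpr := (Fact.out : p.Prime)
    interval_cases p
    · norm_num at h4
    · exact absurd hpr (by norm_num)
  have hnormA : ‖(a:ℚ_[p])‖ = 1 := norm_a hpa
  have hnorm2 : ‖(2:ℚ_[p])‖ = 1 := norm_two' hp
  have hnc : ‖(a:ℚ_[p])/2‖ = 1 := by rw [norm_div, hnormA, hnorm2]; norm_num
  apply Set.eq_univ_of_forall
  intro x
  by_cases hx1 : 1 ≤ ‖x - ((a:ℚ_[p])/2)^1‖
  · exact Set.mem_union_left _ (main hp ha hpa hD 1 (Or.inl rfl) x hx1)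
  · apply Set.mem_union_right
    apply main hp ha hpa hD 2 (Or.inr rfl) x
    push_neg at hx1
    have hc1 : ‖(a:ℚ_[p])/2 - 1‖ = 1 := by
      refine le_antisymm (sub_le_one (le_of_eq hnc) (by norm_num)) (not_lt.1 fun hlt => ?_)
      have hcp1 : ‖(a:ℚ_[p])/2 + 1‖ ≤ 1 := by
        refine (Padic.nonarchimedean _ _).trans ?_
        rw [hnc, norm_one]
        norm_num
      have hA : ‖((a:ℚ_[p])/2)^2 - 1‖ < 1 := by
        have he : ((a:ℚ_[p])/2)^2 - 1 = ((a:ℚ_[p])/2 - 1)*((a:ℚ_[p])/2 + 1) := by ring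
        rw [he, norm_mul]
        calc ‖(a:ℚ_[p])/2 - 1‖ * ‖(a:ℚ_[p])/2 + 1‖ ≤ ‖(a:ℚ_[p])/2 - 1‖ * 1 :=
              mul_le_mul_of_nonneg_left hcp1 (norm_nonneg _)
          _ = ‖(a:ℚ_[p])/2 - 1‖ := mul_one _
          _ < 1 := hlt
      have hB : ‖((a:ℚ_[p])/2)^2 + 1‖ < 1 := by
        have haQ : (a:ℚ_[p]) ≠ 0 := Int.cast_ne_zero.2 ha
        have he : ((a:ℚ_[p])/2)^2 + 1 = ((a^2+4 : ℤ):ℚ_[p]) / 4 := by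
          push_cast
          field_simp
          ring
        rw [he, norm_div, norm_four hp, div_one]
        calc ‖((a^2+4:ℤ):ℚ_[p])‖ ≤ (p:ℝ)^(-2:ℤ) := (Padic.norm_int_le_pow_iff_dvd _ 2).2 hD
          _ < 1 := by
            calc (p:ℝ)^(-2:ℤ) < (p:ℝ)^(0:ℤ) := zpow_lt_zpow_right₀ hp1 (by norm_num)
              _ = 1 := by norm_num
      have h2lt : ‖(2:ℚ_[p])‖ < 1 := by
        have he : (2:ℚ_[p]) = (((a:ℚ_[p])/2)^2 + 1) - (((a:ℚ_[p])/2)^2 - 1) := by ring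
        rw [he]
        exact lt_of_le_of_lt (nonarch_sub _ _) (max_lt hB hA)
      rw [hnorm2] at h2lt
      linarith
    have hcc : ‖((a:ℚ_[p])/2)^2 - (a:ℚ_[p])/2‖ = 1 := by
      have he : ((a:ℚ_[p])/2)^2 - (a:ℚ_[p])/2 = ((a:ℚ_[p])/2) * ((a:ℚ_[p])/2 - 1) := by ring
      rw [he, norm_mul, hnc, one_mul, hc1]
    have he : x - ((a:ℚ_[p])/2)^2 = (-(((a:ℚ_[p])/2)^2 - (a:ℚ_[p])/2)) + (x - ((a:ℚ_[p])/2)^1) := by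
      ring
    rw [he, iso (by rw [norm_neg, hcc]; exact hx1), norm_neg, hcc]
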